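/- Let f_n be entire functions, z_n → z₀ complex numbers, ρ_n → 0 positive reals, a ∈ ℂ, and suppose g_n(ζ) := ρ_n^{-k}(f_n(z_n + ρ_n ζ) - a) converges locally uniformly on ℂ to a nonconstant entire function g. If for each n, f_n(z) = a implies f_n^{(k)}(z) = a, and g(ζ₀) = 0, then g^{(k)}(ζ₀) = a. -/

import Mathlib

open Filter
open Metric


lemma tluo_iteratedDeriv (k : ℕ) (F : ℕ → ℂ → ℂ) (g : ℂ → ℂ)
    (hF : ∀ n, Differentiable ℂ (F n))
    (h : TendstoLocallyUniformlyOn F g atTop Set.univ) :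
    TendstoLocallyUniformlyOn (fun n => iteratedDeriv k (F n)) (iteratedDeriv k g)
      atTop Set.univ := by
  induction k with
  | zero => simpa using h
  | succ k ih =>
    have hd : ∀ n, DifferentiableOn ℂ (iteratedDeriv k (F n)) Set.univ := fun n =>
      (((hF n).contDiff (n := (⊤ : ℕ∞))).differentiable_iteratedDeriv k
        (by exact_mod_cast WithTop.coe_lt_top _)).differentiableOn
    have := ih.deriv (Eventually.of_forall hd) isOpen_univ
    simpa [iteratedDeriv_succ, Function.comp_def] using this

lemma gk_eq (k : ℕ) (hk : 1 ≤ k) (a z : ℂ) (ρ : ℝ) (hρ : ρ ≠ 0) (f : ℂ → ℂ)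
    (hf : Differentiable ℂ f) (ζ : ℂ) :
    iteratedDeriv k (fun ζ => ((ρ:ℂ)^k)⁻¹ * (f (z + (ρ:ℂ) * ζ) - a)) ζ
      = iteratedDeriv k f (z + (ρ:ℂ) * ζ) := by
  have hρ' : (ρ:ℂ) ≠ 0 := by exact_mod_cast hρ
  have hcomp : Differentiable ℂ (fun ζ : ℂ => f (z + (ρ:ℂ) * ζ)) :=
    hf.comp ((differentiable_const _).add (differentiable_id.const_mul _))
  have hsub : Differentiable ℂ (fun ζ : ℂ => f (z + (ρ:ℂ) * ζ) - a) := hcomp.sub_const a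
  have h1 : iteratedDeriv k (fun ζ => ((ρ:ℂ)^k)⁻¹ * (f (z + (ρ:ℂ) * ζ) - a)) ζ
      = ((ρ:ℂ)^k)⁻¹ * iteratedDeriv k (fun ζ => f (z + (ρ:ℂ) * ζ) - a) ζ := by
    simp_rw [← iteratedDerivWithin_univ]
    exact iteratedDerivWithin_const_mul (Set.mem_univ ζ) uniqueDiffOn_univ _
      (hsub.contDiff.contDiffWithinAt)
  have h2 : iteratedDeriv k (fun ζ => f (z + (ρ:ℂ) * ζ) - a) ζ
      = iteratedDeriv k (fun ζ => f (z + (ρ:ℂ) * ζ)) ζ := by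
    have : (fun ζ => f (z + (ρ:ℂ) * ζ) - a) = (fun ζ => (-a) + f (z + (ρ:ℂ) * ζ)) := by
      funext w; ring
    rw [this]
    simp_rw [← iteratedDerivWithin_univ]
    exact iteratedDerivWithin_const_add hk (-a)
  have h3 : iteratedDeriv k (fun ζ => f (z + (ρ:ℂ) * ζ)) ζ
      = (ρ:ℂ)^k * iteratedDeriv k f (z + (ρ:ℂ) * ζ) := by
    have hc : ContDiff ℂ k (fun w : ℂ => f (z + w)) :=
      (hf.comp ((differentiable_const _).add differentiable_id)).contDiff
    have := iteratedDeriv_comp_const_mul hc (ρ:ℂ)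
    have h4 := congrFun (iteratedDeriv_comp_const_add k f z) ((ρ:ℂ) * ζ)
    calc iteratedDeriv k (fun ζ => f (z + (ρ:ℂ) * ζ)) ζ
        = (ρ:ℂ)^k * iteratedDeriv k (fun w : ℂ => f (z + w)) ((ρ:ℂ) * ζ) := congrFun this ζ
      _ = (ρ:ℂ)^k * iteratedDeriv k f (z + (ρ:ℂ) * ζ) := by rw [h4]
  rw [h1, h2, h3, ← mul_assoc, inv_mul_cancel₀ (pow_ne_zero _ hρ'), one_mul]

lemma exists_zero_of_close (g gn : ℂ → ℂ) (ζ₀ : ℂ) (r m : ℝ) (hr : 0 < r) (hm : 0 < m)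
    (hgn : Differentiable ℂ gn)
    (hlow : ∀ w ∈ sphere ζ₀ r, m ≤ ‖g w‖)
    (hclose : ∀ w ∈ closedBall ζ₀ r, ‖gn w - g w‖ < m / 2)
    (hζ₀ : g ζ₀ = 0) : ∃ w ∈ closedBall ζ₀ r, gn w = 0 := by
  by_contra hno
  push_neg at hno
  have hζmem : ζ₀ ∈ closedBall ζ₀ r := mem_closedBall_self hr.le
  have hgnζ : ‖gn ζ₀‖ < m / 2 := by
    have := hclose ζ₀ hζmem; rwa [hζ₀, sub_zero] at this
  have hcl : closure (ball ζ₀ r) = closedBall ζ₀ r := closure_ball ζ₀ hr.ne'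
  have hdc : DiffContOnCl ℂ (fun w => (gn w)⁻¹) (ball ζ₀ r) := by
    refine ⟨fun w hw => (hgn.differentiableAt.inv
      (hno w (ball_subset_closedBall hw))).differentiableWithinAt, ?_⟩
    rw [hcl]
    exact (hgn.continuous.continuousOn).inv₀ fun w hw => hno w hw
  have hmax : ‖(gn ζ₀)⁻¹‖ ≤ (m / 2)⁻¹ := by
    refine Complex.norm_le_of_forall_mem_frontier_norm_le isBounded_ball hdc ?_ ?_
    · intro w hw
      rw [frontier_ball ζ₀ hr.ne'] at hw
      have h1 : m ≤ ‖g w‖ := hlow w hw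
      have h2 : ‖gn w - g w‖ < m / 2 := hclose w (sphere_subset_closedBall hw)
      have h3 : m / 2 ≤ ‖gn w‖ := by
        have := norm_sub_norm_le (g w) (gn w)
        rw [norm_sub_rev] at h2
        linarith
      rw [norm_inv]
      exact inv_anti₀ (by linarith) h3
    · rw [hcl]; exact hζmem
  have hne : gn ζ₀ ≠ 0 := hno ζ₀ hζmem
  rw [norm_inv] at hmax
  have := (inv_le_inv₀ (norm_pos_iff.mpr hne) (by linarith)).mp hmax
  linarith

/-- Zalcman rescaling step: if `gₙ(ζ) = ρₙ⁻ᵏ (fₙ(zₙ + ρₙ ζ) - a)` converges locally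
uniformly to a nonconstant entire `g`, each `fₙ` is entire, and `fₙ(z) = a` implies
`fₙ^{(k)}(z) = a`, then a zero `ζ₀` of `g` satisfies `g^{(k)}(ζ₀) = a`. -/
theorem stmt_8 (k : ℕ) (hk : 1 ≤ k) (a : ℂ) (f : ℕ → ℂ → ℂ)
    (hf : ∀ n, Differentiable ℂ (f n))
    (z : ℕ → ℂ) (z₀ : ℂ) (hz : Tendsto z atTop (nhds z₀))
    (ρ : ℕ → ℝ) (hρpos : ∀ n, 0 < ρ n) (hρ : Tendsto ρ atTop (nhds 0))
    (g : ℂ → ℂ) (hg : Differentiable ℂ g) (hnc : ¬ ∃ c : ℂ, ∀ ζ, g ζ = c)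
    (hconv : TendstoLocallyUniformly
      (fun n ζ => ((ρ n : ℂ) ^ k)⁻¹ * (f n (z n + (ρ n : ℂ) * ζ) - a)) g atTop)
    (hshare : ∀ n, ∀ w : ℂ, f n w = a → iteratedDeriv k (f n) w = a)
    (ζ₀ : ℂ) (hζ₀ : g ζ₀ = 0) :
    iteratedDeriv k g ζ₀ = a := by
  set F : ℕ → ℂ → ℂ := fun n ζ => ((ρ n : ℂ) ^ k)⁻¹ * (f n (z n + (ρ n : ℂ) * ζ) - a) with hF
  have hFd : ∀ n, Differentiable ℂ (F n) := fun n =>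
    ((((hf n).comp ((differentiable_const _).add
      (differentiable_id.const_mul _))).sub_const a).const_mul _)
  have hconv' : TendstoLocallyUniformlyOn F g atTop Set.univ := by
    rwa [tendstoLocallyUniformlyOn_univ]
  -- convergence of k-th derivatives
  have hDconv := tluo_iteratedDeriv k F g hFd hconv'
  -- the k-th derivative of `F n` is the k-th derivative of `f n` at the rescaled point
  have hFk : ∀ n ζ, iteratedDeriv k (F n) ζ = iteratedDeriv k (f n) (z n + (ρ n : ℂ) * ζ) :=
    fun n ζ => gk_eq k hk a (z n) (ρ n) (hρpos n).ne' (f n) (hf n) ζ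
  -- isolated zeros of g
  have hga : ∀ w, AnalyticAt ℂ g w := fun w => hg.analyticAt w
  have hiso : ∀ᶠ w in nhdsWithin ζ₀ {ζ₀}ᶜ, g w ≠ 0 := by
    rcases (hga ζ₀).eventually_eq_zero_or_eventually_ne_zero with h | h
    · exfalso
      apply hnc
      refine ⟨0, fun ζ => ?_⟩
      have : Set.EqOn g 0 Set.univ := by
        apply AnalyticOnNhd.eqOn_zero_of_preconnected_of_eventuallyEq_zero
          (fun w _ => hga w) isPreconnected_univ (Set.mem_univ ζ₀)
        exact h
      exact this (Set.mem_univ ζ)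
    · exact h
  obtain ⟨r₀, hr₀, hr₀'⟩ : ∃ r₀ > 0, ∀ w, dist w ζ₀ < r₀ → w ≠ ζ₀ → g w ≠ 0 := by
    rw [eventually_nhdsWithin_iff] at hiso
    rcases Metric.eventually_nhds_iff.mp hiso with ⟨ε, hε, hball⟩
    exact ⟨ε, hε, fun w h1 h2 => hball h1 h2⟩
  -- it suffices to bound the distance by every ε > 0
  refine eq_of_forall_dist_le fun ε hε => ?_
  -- continuity of the k-th derivative of g
  have hGkc : ContinuousAt (iteratedDeriv k g) ζ₀ :=
    (((hg.contDiff (n := (⊤ : ℕ∞))).differentiable_iteratedDeriv k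
      (by exact_mod_cast WithTop.coe_lt_top _)).continuous).continuousAt
  obtain ⟨δ, hδ, hδ'⟩ := Metric.continuousAt_iff.mp hGkc (ε/3) (by linarith)
  set r : ℝ := min (δ/2) (r₀/2) with hrdef
  have hr : 0 < r := lt_min (by linarith) (by linarith)
  -- minimum of ‖g‖ on the sphere
  obtain ⟨w₀, hw₀s, hw₀min⟩ := (isCompact_sphere ζ₀ r).exists_isMinOn
    (NormedSpace.sphere_nonempty.mpr hr.le)
    (continuous_norm.comp hg.continuous).continuousOn
  set m : ℝ := ‖g w₀‖ with hmdef
  have hm : 0 < m := by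
    rw [hmdef, norm_pos_iff]
    apply hr₀' w₀
    · rw [mem_sphere_iff_norm] at hw₀s
      rw [dist_eq_norm, hw₀s]
      calc r ≤ r₀/2 := min_le_right _ _
        _ < r₀ := by linarith
    · intro hcon
      rw [hcon] at hw₀s
      simp at hw₀s
      linarith [hw₀s ▸ hr]
  have hlow : ∀ w ∈ sphere ζ₀ r, m ≤ ‖g w‖ := fun w hw => hw₀min hw
  -- uniform convergence on the closed ball, for F and for its k-th derivatives
  have hcK : IsCompact (closedBall ζ₀ r) := isCompact_closedBall _ _
  have hu1 : TendstoUniformlyOn F g atTop (closedBall ζ₀ r) :=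
    (tendstoLocallyUniformlyOn_iff_tendstoUniformlyOn_of_compact hcK).mp
      (hconv'.mono (Set.subset_univ _))
  have hu2 : TendstoUniformlyOn (fun n => iteratedDeriv k (F n)) (iteratedDeriv k g)
      atTop (closedBall ζ₀ r) :=
    (tendstoLocallyUniformlyOn_iff_tendstoUniformlyOn_of_compact hcK).mp
      (hDconv.mono (Set.subset_univ _))
  have e1 := Metric.tendstoUniformlyOn_iff.mp hu1 (m/2) (by linarith)
  have e2 := Metric.tendstoUniformlyOn_iff.mp hu2 (ε/3) (by linarith)
  obtain ⟨n, hn1, hn2⟩ := (e1.and e2).exists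
  -- find a zero of F n in the closed ball
  obtain ⟨w, hwmem, hwzero⟩ := exists_zero_of_close g (F n) ζ₀ r m hr hm (hFd n) hlow
    (fun w hw => by rw [← dist_eq_norm, dist_comm]; exact hn1 w hw) hζ₀
  -- this zero comes from a value of f n equal to a
  have hfa : f n (z n + (ρ n : ℂ) * w) = a := by
    have hρ' : ((ρ n : ℂ)) ≠ 0 := by exact_mod_cast (hρpos n).ne'
    have : ((ρ n : ℂ) ^ k)⁻¹ ≠ 0 := inv_ne_zero (pow_ne_zero _ hρ')
    have := mul_eq_zero.mp hwzero
    rcases this with h | h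
    · exact absurd h ‹((ρ n : ℂ) ^ k)⁻¹ ≠ 0›
    · exact sub_eq_zero.mp h
  have hFkw : iteratedDeriv k (F n) w = a := by
    rw [hFk n w]
    exact hshare n _ hfa
  -- final estimate
  have d1 : dist (iteratedDeriv k g ζ₀) (iteratedDeriv k g w) < ε/3 := by
    rw [dist_comm]
    apply hδ'
    calc dist w ζ₀ ≤ r := mem_closedBall.mp hwmem
      _ ≤ δ/2 := min_le_left _ _
      _ < δ := by linarith
  have d2 : dist (iteratedDeriv k g w) a < ε/3 := by
    rw [← hFkw]
    exact hn2 w hwmem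
  calc dist (iteratedDeriv k g ζ₀) a
      ≤ dist (iteratedDeriv k g ζ₀) (iteratedDeriv k g w) + dist (iteratedDeriv k g w) a :=
        dist_triangle _ _ _
    _ ≤ ε := by linarith
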